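/- Let (W,S) be a Coxeter system with set of reflections T, alternating subgroup W^+, and fix s_0 ∈ S with T_0 = {s_0 t : t ∈ T}. For every w ∈ W^+: ℓ_{T_0}(w) = ℓ_T(w) if ℓ_{T_0}(w) is even, and ℓ_{T_0}(w) = ℓ_T(w) − 1 if ℓ_{T_0}(w) is odd. -/

import Mathlib

attribute [local instance] Classical.propDecidable

/-- The absolute length of `w` with respect to a set `T`: the minimum length of a word
for `w` in the alphabet `T`. -/
noncomputable def absLength {W : Type*} [Group W] (T : Set W) (w : W) : ℕ :=
  sInf {n | ∃ l : List W, (∀ t ∈ l, t ∈ T) ∧ l.prod = w ∧ l.length = n}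

/-- The set of reflections `T` of a Coxeter system. -/
def reflSet {B W : Type*} [Group W] {M : CoxeterMatrix B} (cs : CoxeterSystem M W) :
    Set W := {t | cs.IsReflection t}

/-- The set `T₀ = {s₀ t : t ∈ T}`. -/
def tZero {B W : Type*} [Group W] {M : CoxeterMatrix B} (cs : CoxeterSystem M W)
    (i₀ : B) : Set W := {w | ∃ t, cs.IsReflection t ∧ w = cs.simple i₀ * t}

/-- The alternating subgroup `W⁺` of a Coxeter system: the kernel of the sign character
(which maps every simple reflection to `−1`). -/
def alternating {B W : Type*} [Group W] {M : CoxeterMatrix B} (cs : CoxeterSystem M W) :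
    Subgroup W := cs.lengthParity.ker

section Aux

variable {B W : Type*} [Group W] {M : CoxeterMatrix B} (cs : CoxeterSystem M W) (i₀ : B)

lemma lengthParity_refl {t : W} (ht : cs.IsReflection t) :
    cs.lengthParity t = Multiplicative.ofAdd 1 := by
  obtain ⟨w, i, rfl⟩ := ht
  rw [map_mul, map_mul, map_inv, cs.lengthParity_simple, mul_right_comm,
    mul_inv_cancel, one_mul]

lemma lengthParity_listProd {l : List W} (hl : ∀ t ∈ l, cs.IsReflection t) :
    cs.lengthParity l.prod = Multiplicative.ofAdd (l.length : ZMod 2) := by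
  induction l with
  | nil => simp
  | cons a rest ih =>
    rw [List.prod_cons, map_mul, lengthParity_refl cs (hl a (by simp)),
      ih (fun t ht => hl t (by simp [ht]))]
    rw [← ofAdd_add]
    congr 1
    simp only [List.length_cons, Nat.cast_add, Nat.cast_one]
    ring

lemma even_length_of_ker {w : W} (hw : w ∈ alternating cs) {l : List W}
    (hl : ∀ t ∈ l, cs.IsReflection t) (hprod : l.prod = w) : Even l.length := by
  have h1 : cs.lengthParity w = 1 := hw
  rw [← hprod, lengthParity_listProd cs hl] at h1
  have : (l.length : ZMod 2) = 0 := by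
    have := Multiplicative.toAdd.injective (a₁ := Multiplicative.ofAdd ((l.length : ℕ) : ZMod 2)) (a₂ := 1) h1
    simpa using h1
  exact ZMod.natCast_eq_zero_iff_even.mp this

/-- Convert a word over T₀ into a word over T. -/
lemma t0_to_t : ∀ (n : ℕ) (l : List W), l.length ≤ n → (∀ x ∈ l, x ∈ tZero cs i₀) →
    ∃ l' : List W, (∀ x ∈ l', x ∈ reflSet cs) ∧ l'.prod = l.prod ∧
      (Even l.length → l'.length = l.length) ∧
      (Odd l.length → l'.length = l.length + 1) := by
  intro n
  induction n with
  | zero =>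
    intro l hl _
    rw [Nat.le_zero, List.length_eq_zero_iff] at hl
    subst hl
    exact ⟨[], by simp, by simp, by simp, by simp⟩
  | succ n ih =>
    intro l hl hmem
    match l with
    | [] => exact ⟨[], by simp, by simp, by simp, by simp⟩
    | [a] =>
      obtain ⟨t, ht, rfl⟩ := hmem a (by simp)
      refine ⟨[cs.simple i₀, t], ?_, by simp, by simp, by simp⟩
      intro x hx
      rcases List.mem_pair.mp hx with rfl | rfl
      · exact cs.isReflection_simple i₀
      · exact ht
    | a :: b :: rest =>
      obtain ⟨t₁, ht₁, rfl⟩ := hmem a (by simp)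
      obtain ⟨t₂, ht₂, rfl⟩ := hmem b (by simp)
      obtain ⟨l', hl'mem, hl'prod, he, ho⟩ := ih rest (by simp at hl ⊢; omega)
        (fun x hx => hmem x (by simp [hx]))
      refine ⟨(cs.simple i₀ * t₁ * cs.simple i₀) :: t₂ :: l', ?_, ?_, ?_, ?_⟩
      · intro x hx
        rcases List.mem_cons.mp hx with rfl | hx
        · have := ht₁.conj (cs.simple i₀)
          rwa [cs.inv_simple] at this
        rcases List.mem_cons.mp hx with rfl | hx
        · exact ht₂
        · exact hl'mem x hx
      · simp only [List.prod_cons, hl'prod, mul_assoc]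
      · intro h
        simp only [List.length_cons] at h ⊢
        have : Even rest.length := by
          rcases h with ⟨k, hk⟩
          exact ⟨k - 1, by omega⟩
        rw [he this]
      · intro h
        simp only [List.length_cons] at h ⊢
        have : Odd rest.length := by
          rcases h with ⟨k, hk⟩
          exact ⟨k - 1, by omega⟩
        rw [ho this]

/-- Convert an even-length word over T into a word over T₀. -/
lemma t_to_t0 : ∀ (n : ℕ) (l : List W), l.length ≤ n → (∀ x ∈ l, x ∈ reflSet cs) →
    Even l.length →
    ∃ l' : List W, (∀ x ∈ l', x ∈ tZero cs i₀) ∧ l'.prod = l.prod ∧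
      l'.length = l.length := by
  intro n
  induction n with
  | zero =>
    intro l hl _ _
    rw [Nat.le_zero, List.length_eq_zero_iff] at hl
    subst hl
    exact ⟨[], by simp, by simp, by simp⟩
  | succ n ih =>
    intro l hl hmem heven
    match l with
    | [] => exact ⟨[], by simp, by simp, by simp⟩
    | [a] => simp [Nat.even_iff] at heven
    | a :: b :: rest =>
      have ht₁ : cs.IsReflection a := hmem a (by simp)
      have ht₂ : cs.IsReflection b := hmem b (by simp)
      have hrest : Even rest.length := by
        simp only [List.length_cons] at heven
        rcases heven with ⟨k, hk⟩
        exact ⟨k - 1, by omega⟩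
      obtain ⟨l', hl'mem, hl'prod, hl'len⟩ := ih rest (by simp at hl ⊢; omega)
        (fun x hx => hmem x (by simp [hx])) hrest
      have hs : cs.simple i₀ * cs.simple i₀ = 1 := cs.simple_mul_simple_self i₀
      refine ⟨(a * cs.simple i₀) :: (cs.simple i₀ * b) :: l', ?_, ?_, by simp [hl'len]⟩
      · intro x hx
        rcases List.mem_cons.mp hx with rfl | hx
        · refine ⟨cs.simple i₀ * a * cs.simple i₀, ?_, ?_⟩
          · have := ht₁.conj (cs.simple i₀)
            rwa [cs.inv_simple] at this
          · rw [← mul_assoc, ← mul_assoc, hs, one_mul]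
        rcases List.mem_cons.mp hx with rfl | hx
        · exact ⟨b, ht₂, rfl⟩
        · exact hl'mem x hx
      · have hs2 : ∀ x : W, cs.simple i₀ * (cs.simple i₀ * x) = x := by
          intro x; rw [← mul_assoc, hs, one_mul]
        simp only [List.prod_cons, hl'prod, mul_assoc, hs2]

lemma exists_t_word (w : W) :
    ∃ l : List W, (∀ x ∈ l, x ∈ reflSet cs) ∧ l.prod = w := by
  obtain ⟨ω, rfl⟩ := cs.wordProd_surjective w
  refine ⟨ω.map cs.simple, ?_, rfl⟩
  intro x hx
  obtain ⟨i, _, rfl⟩ := List.mem_map.mp hx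
  exact cs.isReflection_simple i

end Aux

/-!
Statement 16: for every w ∈ W⁺, ℓ_{T₀}(w) = ℓ_T(w) if ℓ_{T₀}(w) is even, and
ℓ_{T₀}(w) = ℓ_T(w) − 1 if ℓ_{T₀}(w) is odd.
-/
theorem length_tZero_eq {B W : Type*} [Group W] {M : CoxeterMatrix B}
    (cs : CoxeterSystem M W) (i₀ : B) :
    ∀ w ∈ alternating cs,
      (Even (absLength (tZero cs i₀) w) →
        absLength (tZero cs i₀) w = absLength (reflSet cs) w) ∧
      (Odd (absLength (tZero cs i₀) w) →
        absLength (tZero cs i₀) w = absLength (reflSet cs) w - 1) := by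
  intro w hw
  set ST : Set ℕ := {n | ∃ l : List W, (∀ t ∈ l, t ∈ reflSet cs) ∧ l.prod = w ∧ l.length = n}
    with hST
  set S0 : Set ℕ := {n | ∃ l : List W, (∀ t ∈ l, t ∈ tZero cs i₀) ∧ l.prod = w ∧ l.length = n}
    with hS0
  have hTdef : absLength (reflSet cs) w = sInf ST := rfl
  have h0def : absLength (tZero cs i₀) w = sInf S0 := rfl
  rw [hTdef, h0def]
  -- T-set nonempty
  have hSTne : ST.Nonempty := by
    obtain ⟨l, hmem, hprod⟩ := exists_t_word cs w
    exact ⟨l.length, l, hmem, hprod, rfl⟩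
  -- minimal T-witness
  obtain ⟨lT, hlTmem, hlTprod, hlTlen⟩ := Nat.sInf_mem hSTne
  have hlTeven : Even lT.length := even_length_of_ker cs hw hlTmem hlTprod
  -- T₀-set nonempty and k ≤ m
  obtain ⟨l0, hl0mem, hl0prod, hl0len⟩ := t_to_t0 cs i₀ lT.length lT le_rfl hlTmem hlTeven
  have hS0ne : S0.Nonempty := ⟨l0.length, l0, hl0mem, by rw [hl0prod, hlTprod], rfl⟩
  have hkm : sInf S0 ≤ sInf ST := by
    apply Nat.sInf_le
    exact ⟨l0, hl0mem, by rw [hl0prod, hlTprod], by rw [hl0len, hlTlen]⟩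
  -- minimal T₀-witness
  obtain ⟨lZ, hlZmem, hlZprod, hlZlen⟩ := Nat.sInf_mem hS0ne
  have hmEven : Even (sInf ST) := hlTlen ▸ hlTeven
  constructor
  · intro hkEven
    obtain ⟨l', hl'mem, hl'prod, he, _⟩ := t0_to_t cs i₀ lZ.length lZ le_rfl hlZmem
    have hmk : sInf ST ≤ sInf S0 := by
      apply Nat.sInf_le
      exact ⟨l', hl'mem, by rw [hl'prod, hlZprod], by rw [he (hlZlen ▸ hkEven), hlZlen]⟩
    omega
  · intro hkOdd
    obtain ⟨l', hl'mem, hl'prod, _, ho⟩ := t0_to_t cs i₀ lZ.length lZ le_rfl hlZmem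
    have hmk : sInf ST ≤ sInf S0 + 1 := by
      apply Nat.sInf_le
      exact ⟨l', hl'mem, by rw [hl'prod, hlZprod], by rw [ho (hlZlen ▸ hkOdd), hlZlen]⟩
    rcases hkOdd with ⟨a, ha⟩
    rcases hmEven with ⟨b, hb⟩
    omega
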